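/- For every x ∈ ℝ, the limit as k → 0⁺ of q_k(x) / ((1/2)·log(1/√k)) equals |x|. -/

import Mathlib

/-- The implicit regularizer `q_k` of the diagonal linear network. -/
noncomputable def qk (k x : ℝ) : ℝ :=
  Real.sqrt k / 4 * (1 - Real.sqrt (1 + 4 * x ^ 2 / k)
    + 2 * x / Real.sqrt k * Real.arsinh (2 * x / Real.sqrt k))

open Filter Real

lemma qk_neg (k x : ℝ) : qk k (-x) = qk k x := by
  rw [qk, qk, show 2 * -x / Real.sqrt k = -(2 * x / Real.sqrt k) by ring,
    Real.arsinh_neg, neg_sq]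
  ring

lemma log_one_div_sqrt (k : ℝ) :
    Real.log (1 / Real.sqrt k) = -Real.log (Real.sqrt k) := by
  rw [one_div, Real.log_inv]

lemma hD_top : Tendsto (fun k => (1:ℝ) / 2 * Real.log (1 / Real.sqrt k))
    (nhdsWithin 0 (Set.Ioi 0)) atTop := by
  have hs : Tendsto (fun k : ℝ => Real.sqrt k) (nhdsWithin 0 (Set.Ioi 0))
      (nhdsWithin 0 (Set.Ioi 0)) := by
    rw [tendsto_nhdsWithin_iff]
    constructor
    · exact (Real.continuous_sqrt.tendsto' 0 0 (by simp)).mono_left nhdsWithin_le_nhds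
    · filter_upwards [self_mem_nhdsWithin] with k hk
      exact Real.sqrt_pos.2 hk
  have hlog : Tendsto (fun k : ℝ => Real.log (Real.sqrt k))
      (nhdsWithin 0 (Set.Ioi 0)) atBot :=
    Real.tendsto_log_nhdsGT_zero.comp hs
  have h2 : Tendsto (fun k : ℝ => -Real.log (Real.sqrt k))
      (nhdsWithin 0 (Set.Ioi 0)) atTop := tendsto_neg_atTop_iff.2 hlog
  have := h2.const_mul_atTop (show (0:ℝ) < 1/2 by norm_num)
  refine this.congr fun k => ?_
  rw [log_one_div_sqrt]

lemma main_pos (x : ℝ) (hx : 0 < x) :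
    Tendsto (fun k => qk k x / (1 / 2 * Real.log (1 / Real.sqrt k)))
      (nhdsWithin 0 (Set.Ioi 0)) (nhds x) := by
  set N : ℝ → ℝ := fun k => Real.sqrt k / 4 - Real.sqrt (k + 4 * x ^ 2) / 4
    + x / 2 * Real.log (2 * x + Real.sqrt (k + 4 * x ^ 2)) with hN
  have h4 : (0:ℝ) < 2 * x + Real.sqrt (0 + 4 * x ^ 2) := by positivity
  have hsqrt : Tendsto (fun k : ℝ => Real.sqrt (k + 4 * x ^ 2)) (nhds 0)
      (nhds (Real.sqrt (0 + 4 * x ^ 2))) :=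
    (Real.continuous_sqrt.comp (continuous_id.add continuous_const)).tendsto 0
  have hlogc : Tendsto (fun k : ℝ => Real.log (2 * x + Real.sqrt (k + 4 * x ^ 2)))
      (nhds 0) (nhds (Real.log (2 * x + Real.sqrt (0 + 4 * x ^ 2)))) :=
    (Real.continuousAt_log h4.ne').tendsto.comp (tendsto_const_nhds.add hsqrt)
  have hNc : Tendsto N (nhdsWithin 0 (Set.Ioi 0))
      (nhds (Real.sqrt 0 / 4 - Real.sqrt (0 + 4 * x ^ 2) / 4
        + x / 2 * Real.log (2 * x + Real.sqrt (0 + 4 * x ^ 2)))) := by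
    have : Tendsto N (nhds 0) _ :=
      (((Real.continuous_sqrt.tendsto 0).div_const 4).sub (hsqrt.div_const 4)).add
        (hlogc.const_mul (x / 2))
    exact this.mono_left nhdsWithin_le_nhds
  have hratio : Tendsto (fun k => N k / (1 / 2 * Real.log (1 / Real.sqrt k)))
      (nhdsWithin 0 (Set.Ioi 0)) (nhds 0) := hNc.div_atTop hD_top
  have key : ∀ᶠ k in nhdsWithin (0:ℝ) (Set.Ioi 0),
      x + N k / (1 / 2 * Real.log (1 / Real.sqrt k))
        = qk k x / (1 / 2 * Real.log (1 / Real.sqrt k)) := by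
    filter_upwards [Ioo_mem_nhdsGT_of_mem (show (0:ℝ) ∈ Set.Ico 0 1 by norm_num)]
      with k hk
    obtain ⟨hk0, hk1⟩ := hk
    have hsk : 0 < Real.sqrt k := Real.sqrt_pos.2 hk0
    have hsk1 : Real.sqrt k < 1 := by
      rw [show (1:ℝ) = Real.sqrt 1 by simp]
      exact Real.sqrt_lt_sqrt hk0.le hk1
    have hlogneg : Real.log (Real.sqrt k) < 0 := Real.log_neg hsk hsk1
    have hne : Real.log (Real.sqrt k) ≠ 0 := ne_of_lt hlogneg
    have hA : Real.sqrt (1 + 4 * x ^ 2 / k)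
        = Real.sqrt (k + 4 * x ^ 2) / Real.sqrt k := by
      rw [show 1 + 4 * x ^ 2 / k = (k + 4 * x ^ 2) / k by field_simp,
        Real.sqrt_div (by positivity)]
    have hpos : 0 < 2 * x + Real.sqrt (k + 4 * x ^ 2) := by positivity
    have hB : Real.arsinh (2 * x / Real.sqrt k)
        = Real.log (2 * x + Real.sqrt (k + 4 * x ^ 2)) - Real.log (Real.sqrt k) := by
      rw [Real.arsinh]
      have h2 : (2 * x / Real.sqrt k) ^ 2 = 4 * x ^ 2 / k := by
        rw [div_pow, Real.sq_sqrt hk0.le]; ring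
      rw [h2, hA, ← add_div, Real.log_div hpos.ne' hsk.ne']
    have hq : qk k x = N k + x / 2 * (- Real.log (Real.sqrt k)) := by
      rw [qk, hA, hB, hN]
      field_simp
      ring
    rw [hq, log_one_div_sqrt]
    field_simp
    ring
  have hfin := (tendsto_const_nhds.add hratio :
    Tendsto (fun k => x + N k / (1 / 2 * Real.log (1 / Real.sqrt k)))
      (nhdsWithin 0 (Set.Ioi 0)) (nhds (x + 0)))
  rw [add_zero] at hfin
  exact hfin.congr' key

/-- for every `x`, `q_k(x) / ((1/2)·log(1/√k)) → |x|` as `k → 0⁺`. -/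
theorem stmt_4 (x : ℝ) :
    Filter.Tendsto (fun k => qk k x / (1 / 2 * Real.log (1 / Real.sqrt k)))
      (nhdsWithin 0 (Set.Ioi 0)) (nhds |x|) := by
  rcases lt_trichotomy x 0 with h | h | h
  · have := main_pos (-x) (by linarith)
    simp only [qk_neg] at this
    rwa [abs_of_neg h]
  · subst h
    simp only [qk, abs_zero]
    norm_num
  · rw [abs_of_pos h]
    exact main_pos x h
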